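/- In the two-party setting with ζ[0] > 0, every execution of the Eneström–Phragmén procedure satisfies: (i) max(α[s]+ζ[s], β[s]+ζ[s]) > ρ for all s ≤ n−1; (ii) for all s ≤ n−1, if α[s] > β[s] the seat goes to A and α[s+1] = (1 − ρ/(α[s]+ζ[s]))·α[s], β[s+1] = β[s], ζ[s+1] = (1 − ρ/(α[s]+ζ[s]))·ζ[s], while if α[s] < β[s] the seat goes to B and the symmetric formulas hold (and if α[s] = β[s] either alternative may occur); (iii) α[s] + β[s] + ζ[s] = (n+1−s)·ρ for all s ≤ n; (iv) α[s] > 0, β[s] > 0 and ζ[s] > 0 for all s ≤ n. -/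

import Mathlib

/-!
The Eneström–Phragmén procedure in the two-party setting: the candidates are two
parties `A` and `B` of unlimited capacity, and the vote types are `{A}`, `{B}` and
`{A,B}` with step-`s` weights (divided by the total vote `v`) denoted `α s`, `β s`
and `ζ s` respectively; `ρ n = q / v = 1 / (n + 1)` is the normalized Droop quota.
At step `s < n`, seat `s + 1` goes to `A` (recorded by `toA s = true`) or to `B`
(`toA s = false`); the winner must maximize the support (`α s + ζ s` for `A`,
`β s + ζ s` for `B`), and the votes approving the winner are reduced according
to the quota rule.
-/

namespace EP2

/-- The normalized Droop quota `ρ = q / v = 1 / (n + 1)`. -/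
noncomputable def ρ (n : ℕ) : ℝ := 1 / (n + 1)

/-- An execution of the Eneström–Phragmén procedure in the two-party setting, with
`n` seats and initial normalized weights `α0, β0, ζ0` of the vote types
`{A}`, `{B}`, `{A,B}`. -/
structure TPExec (n : ℕ) (α0 β0 ζ0 : ℝ) : Type where
  /-- normalized weight of the votes approving only `A` -/
  α : ℕ → ℝ
  /-- normalized weight of the votes approving only `B` -/
  β : ℕ → ℝ
  /-- normalized weight of the votes approving both `A` and `B` -/
  ζ : ℕ → ℝ
  /-- `toA s = true` iff seat `s + 1` is allocated to party `A` -/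
  toA : ℕ → Bool
  init_α : α 0 = α0
  init_β : β 0 = β0
  init_ζ : ζ 0 = ζ0
  /-- the winner maximizes the support: if `A` wins then `β s + ζ s ≤ α s + ζ s` -/
  choiceA : ∀ s < n, toA s = true → β s ≤ α s
  /-- the winner maximizes the support: if `B` wins then `α s + ζ s ≤ β s + ζ s` -/
  choiceB : ∀ s < n, toA s = false → α s ≤ β s
  stepA_ge : ∀ s < n, toA s = true → ρ n ≤ α s + ζ s →
    α (s + 1) = (1 - ρ n / (α s + ζ s)) * α s ∧
    ζ (s + 1) = (1 - ρ n / (α s + ζ s)) * ζ s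
  stepA_lt : ∀ s < n, toA s = true → α s + ζ s < ρ n →
    α (s + 1) = 0 ∧ ζ (s + 1) = 0
  stepA_β : ∀ s < n, toA s = true → β (s + 1) = β s
  stepB_ge : ∀ s < n, toA s = false → ρ n ≤ β s + ζ s →
    β (s + 1) = (1 - ρ n / (β s + ζ s)) * β s ∧
    ζ (s + 1) = (1 - ρ n / (β s + ζ s)) * ζ s
  stepB_lt : ∀ s < n, toA s = false → β s + ζ s < ρ n →
    β (s + 1) = 0 ∧ ζ (s + 1) = 0
  stepB_α : ∀ s < n, toA s = false → α (s + 1) = α s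

/-- Number of seats allocated to party `A` during steps `a, …, b - 1`. -/
def cntA {n : ℕ} {α0 β0 ζ0 : ℝ} (E : TPExec n α0 β0 ζ0) (a b : ℕ) : ℕ :=
  ((Finset.Ico a b).filter (fun s => E.toA s = true)).card

/-- Number of seats allocated to party `B` during steps `a, …, b - 1`. -/
def cntB {n : ℕ} {α0 β0 ζ0 : ℝ} (E : TPExec n α0 β0 ζ0) (a b : ℕ) : ℕ :=
  ((Finset.Ico a b).filter (fun s => E.toA s = false)).card

/-- Total number of seats allocated to party `A`. -/
def nA {n : ℕ} {α0 β0 ζ0 : ℝ} (E : TPExec n α0 β0 ζ0) : ℕ := cntA E 0 n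

end EP2

open EP2 in
/-- Lemma 1 of the paper: in the two-party setting with `ζ[0] > 0`,
every execution satisfies: (i) `max (α[s]+ζ[s], β[s]+ζ[s]) > ρ` for all `s ≤ n-1`;
(ii) for `s ≤ n-1`, if `α[s] > β[s]` the seat goes to `A` and the update formulas of
equation (cases) hold, and symmetrically if `α[s] < β[s]`; (iii)
`α[s]+β[s]+ζ[s] = (n+1-s)·ρ` for all `s ≤ n`; (iv) `α[s], β[s], ζ[s] > 0` for all
`s ≤ n`. -/
theorem enestrom_phragmen_two_party_lemma1
    (n : ℕ) (hn : 1 ≤ n) (α0 β0 ζ0 : ℝ)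
    (hα0 : 0 < α0) (hβ0 : 0 < β0) (hζ0 : 0 < ζ0) (hsum : α0 + β0 + ζ0 = 1)
    (E : TPExec n α0 β0 ζ0) :
    (∀ s < n, ρ n < max (E.α s + E.ζ s) (E.β s + E.ζ s)) ∧
    (∀ s < n,
      (E.β s < E.α s → E.toA s = true ∧
        E.α (s + 1) = (1 - ρ n / (E.α s + E.ζ s)) * E.α s ∧
        E.β (s + 1) = E.β s ∧
        E.ζ (s + 1) = (1 - ρ n / (E.α s + E.ζ s)) * E.ζ s) ∧
      (E.α s < E.β s → E.toA s = false ∧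
        E.β (s + 1) = (1 - ρ n / (E.β s + E.ζ s)) * E.β s ∧
        E.α (s + 1) = E.α s ∧
        E.ζ (s + 1) = (1 - ρ n / (E.β s + E.ζ s)) * E.ζ s)) ∧
    (∀ s ≤ n, E.α s + E.β s + E.ζ s = ((n : ℝ) + 1 - s) * ρ n) ∧
    (∀ s ≤ n, 0 < E.α s ∧ 0 < E.β s ∧ 0 < E.ζ s) := by

  have hρ : 0 < ρ n := by
    unfold ρ; positivity
  -- Main invariant by induction
  have key : ∀ s, s ≤ n → (0 < E.α s ∧ 0 < E.β s ∧ 0 < E.ζ s) ∧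
      E.α s + E.β s + E.ζ s = ((n : ℝ) + 1 - s) * ρ n := by
    intro s
    induction s with
    | zero =>
      intro _
      refine ⟨⟨by rw [E.init_α]; exact hα0, by rw [E.init_β]; exact hβ0,
        by rw [E.init_ζ]; exact hζ0⟩, ?_⟩
      rw [E.init_α, E.init_β, E.init_ζ, hsum]
      unfold ρ
      have : (n : ℝ) + 1 ≠ 0 := by positivity
      field_simp
      simp
    | succ s ih =>
      intro hs1
      have hsn : s < n := hs1
      obtain ⟨⟨ha, hb, hz⟩, hsum'⟩ := ih hsn.le
      have hcast : (s : ℝ) + 1 ≤ n := by exact_mod_cast hs1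
      have h2ρ : 2 * ρ n ≤ ((n : ℝ) + 1 - s) * ρ n := by nlinarith
      cases hAB : E.toA s with
      | true =>
        have hba : E.β s ≤ E.α s := E.choiceA s hsn hAB
        have hw : ρ n < E.α s + E.ζ s := by nlinarith
        have hwpos : 0 < E.α s + E.ζ s := lt_trans hρ hw
        obtain ⟨hα', hζ'⟩ := E.stepA_ge s hsn hAB hw.le
        have hβ' := E.stepA_β s hsn hAB
        have hfac : 0 < 1 - ρ n / (E.α s + E.ζ s) := by
          rw [sub_pos, div_lt_one hwpos]; exact hw
        refine ⟨⟨by rw [hα']; positivity, by rw [hβ']; exact hb,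
          by rw [hζ']; positivity⟩, ?_⟩
        rw [hα', hβ', hζ']
        have hne : E.α s + E.ζ s ≠ 0 := ne_of_gt hwpos
        have : (1 - ρ n / (E.α s + E.ζ s)) * E.α s + E.β s +
            (1 - ρ n / (E.α s + E.ζ s)) * E.ζ s
            = E.α s + E.β s + E.ζ s - ρ n := by
          field_simp
          ring
        rw [this, hsum']
        push_cast
        ring
      | false =>
        have hba : E.α s ≤ E.β s := E.choiceB s hsn hAB
        have hw : ρ n < E.β s + E.ζ s := by nlinarith
        have hwpos : 0 < E.β s + E.ζ s := lt_trans hρ hw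
        obtain ⟨hβ', hζ'⟩ := E.stepB_ge s hsn hAB hw.le
        have hα' := E.stepB_α s hsn hAB
        have hfac : 0 < 1 - ρ n / (E.β s + E.ζ s) := by
          rw [sub_pos, div_lt_one hwpos]; exact hw
        refine ⟨⟨by rw [hα']; exact ha, by rw [hβ']; positivity,
          by rw [hζ']; positivity⟩, ?_⟩
        rw [hα', hβ', hζ']
        have hne : E.β s + E.ζ s ≠ 0 := ne_of_gt hwpos
        have : E.α s + (1 - ρ n / (E.β s + E.ζ s)) * E.β s +
            (1 - ρ n / (E.β s + E.ζ s)) * E.ζ s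
            = E.α s + E.β s + E.ζ s - ρ n := by
          field_simp
          ring
        rw [this, hsum']
        push_cast
        ring
  refine ⟨?_, ?_, fun s hs => (key s hs).2, fun s hs => (key s hs).1⟩
  · intro s hs
    obtain ⟨⟨ha, hb, hz⟩, hsum'⟩ := key s hs.le
    have hcast : (s : ℝ) + 1 ≤ n := by exact_mod_cast hs
    have h2ρ : 2 * ρ n ≤ ((n : ℝ) + 1 - s) * ρ n := by nlinarith
    rcases le_total (E.α s) (E.β s) with h | h
    · have : ρ n < E.β s + E.ζ s := by nlinarith
      exact lt_max_of_lt_right this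
    · have : ρ n < E.α s + E.ζ s := by nlinarith
      exact lt_max_of_lt_left this
  · intro s hs
    obtain ⟨⟨ha, hb, hz⟩, hsum'⟩ := key s hs.le
    have hcast : (s : ℝ) + 1 ≤ n := by exact_mod_cast hs
    have h2ρ : 2 * ρ n ≤ ((n : ℝ) + 1 - s) * ρ n := by nlinarith
    constructor
    · intro hlt
      have hA : E.toA s = true := by
        cases hAB : E.toA s with
        | false => exact absurd (E.choiceB s hs hAB) (not_le.mpr hlt)
        | true => rfl
      have hw : ρ n < E.α s + E.ζ s := by nlinarith
      obtain ⟨hα', hζ'⟩ := E.stepA_ge s hs hA hw.le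
      exact ⟨hA, hα', E.stepA_β s hs hA, hζ'⟩
    · intro hlt
      have hB : E.toA s = false := by
        cases hAB : E.toA s with
        | true => exact absurd (E.choiceA s hs hAB) (not_le.mpr hlt)
        | false => rfl
      have hw : ρ n < E.β s + E.ζ s := by nlinarith
      obtain ⟨hβ', hζ'⟩ := E.stepB_ge s hs hB hw.le
      exact ⟨hB, hβ', E.stepB_α s hs hB, hζ'⟩
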